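/- Suppose a + b = c + d. Then for every integer i with 1 ≤ i ≤ n and every integer p with 0 ≤ p ≤ 2^{n-i} − 1, the block subsums of i-th powers agree: Σ_{j = p·2^i + 1}^{(p+1)·2^i} x_j^i = Σ_{j = p·2^i + 1}^{(p+1)·2^i} y_j^i. That is, the symmetry holds not only for the whole sums but for every consecutive block of length 2^i. -/

import Mathlib

/-- The pair of sequences `(x^{(t+1)}, y^{(t+1)})` of length `2^(t+1)` (0-based internal
level `t` corresponds to the paper's level `m = t + 1`).  `(seqXY a b c d k t i).1` is the
`i`-th entry (0-based) of `x^{(t+1)}` and `.2` that of `y^{(t+1)}`. -/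
noncomputable def seqXY (a b c d : ℝ) (k : ℕ → ℝ) : ℕ → ℕ → ℝ × ℝ
  | 0, i => if i = 0 then (a + k 1, c + k 1) else (b + k 1, d + k 1)
  | t + 1, i =>
      if i < 2 ^ (t + 1) then seqXY a b c d k t i
      else ((seqXY a b c d k t (i - 2 ^ (t + 1))).2 + k (t + 2),
            (seqXY a b c d k t (i - 2 ^ (t + 1))).1 + k (t + 2))

/-- `X a b c d k n i` is the entry `x_{i+1}` of the sequence `x^{(n)}` (for `n ≥ 1`,
`0 ≤ i < 2^n`). -/
noncomputable def X (a b c d : ℝ) (k : ℕ → ℝ) (n i : ℕ) : ℝ :=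
  (seqXY a b c d k (n - 1) i).1

/-- `Y a b c d k n i` is the entry `y_{i+1}` of the sequence `y^{(n)}` (for `n ≥ 1`,
`0 ≤ i < 2^n`). -/
noncomputable def Y (a b c d : ℝ) (k : ℕ → ℝ) (n i : ℕ) : ℝ :=
  (seqXY a b c d k (n - 1) i).2

lemma seqXY_first (a b c d : ℝ) (k : ℕ → ℝ) (t j : ℕ) (hj : j < 2 ^ (t + 1)) :
    seqXY a b c d k (t + 1) j = seqXY a b c d k t j := by
  simp [seqXY, hj]

lemma seqXY_second (a b c d : ℝ) (k : ℕ → ℝ) (t j : ℕ) :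
    seqXY a b c d k (t + 1) (2 ^ (t + 1) + j) =
      ((seqXY a b c d k t j).2 + k (t + 2), (seqXY a b c d k t j).1 + k (t + 2)) := by
  have h1 : ¬ (2 ^ (t + 1) + j < 2 ^ (t + 1)) := by omega
  simp [seqXY, h1]

/-- Full sums of powers agree at every level for exponents up to the level. -/
lemma full_sums (a b c d : ℝ) (h : a + b = c + d) (k : ℕ → ℝ) :
    ∀ t r, r ≤ t + 1 →
    ∑ j ∈ Finset.range (2 ^ (t + 1)), (seqXY a b c d k t j).1 ^ r =
    ∑ j ∈ Finset.range (2 ^ (t + 1)), (seqXY a b c d k t j).2 ^ r := by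
  intro t
  induction t with
  | zero =>
      intro r hr
      interval_cases r
      · simp
      · simp [seqXY, Finset.sum_range_succ]
        linarith
  | succ t IH =>
      intro r hr
      have hsplit : ∀ f : ℕ → ℝ, ∑ j ∈ Finset.range (2 ^ (t + 2)), f j =
          ∑ j ∈ Finset.range (2 ^ (t + 1)), f j +
          ∑ j ∈ Finset.range (2 ^ (t + 1)), f (2 ^ (t + 1) + j) := by
        intro f
        have h2 : 2 ^ (t + 2) = 2 ^ (t + 1) + 2 ^ (t + 1) := by ring
        rw [h2, Finset.sum_range_add]
      rw [hsplit, hsplit]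
      have hfirst : ∀ j ∈ Finset.range (2 ^ (t + 1)),
          (seqXY a b c d k (t + 1) j) = seqXY a b c d k t j := by
        intro j hj
        exact seqXY_first a b c d k t j (Finset.mem_range.mp hj)
      have e1 : ∑ j ∈ Finset.range (2 ^ (t + 1)), (seqXY a b c d k (t + 1) j).1 ^ r =
          ∑ j ∈ Finset.range (2 ^ (t + 1)), (seqXY a b c d k t j).1 ^ r :=
        Finset.sum_congr rfl fun j hj => by rw [hfirst j hj]
      have e2 : ∑ j ∈ Finset.range (2 ^ (t + 1)), (seqXY a b c d k (t + 1) j).2 ^ r =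
          ∑ j ∈ Finset.range (2 ^ (t + 1)), (seqXY a b c d k t j).2 ^ r :=
        Finset.sum_congr rfl fun j hj => by rw [hfirst j hj]
      have e3 : ∑ j ∈ Finset.range (2 ^ (t + 1)),
            (seqXY a b c d k (t + 1) (2 ^ (t + 1) + j)).1 ^ r =
          ∑ j ∈ Finset.range (2 ^ (t + 1)), ((seqXY a b c d k t j).2 + k (t + 2)) ^ r :=
        Finset.sum_congr rfl fun j _ => by rw [seqXY_second]
      have e4 : ∑ j ∈ Finset.range (2 ^ (t + 1)),
            (seqXY a b c d k (t + 1) (2 ^ (t + 1) + j)).2 ^ r =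
          ∑ j ∈ Finset.range (2 ^ (t + 1)), ((seqXY a b c d k t j).1 + k (t + 2)) ^ r :=
        Finset.sum_congr rfl fun j _ => by rw [seqXY_second]
      rw [e1, e2, e3, e4]
      -- binomial expansion of the shifted second-half sums
      have hbin : ∀ g : ℕ → ℝ,
          ∑ j ∈ Finset.range (2 ^ (t + 1)), (g j + k (t + 2)) ^ r =
          ∑ s ∈ Finset.range (r + 1),
            (∑ j ∈ Finset.range (2 ^ (t + 1)), g j ^ s) * k (t + 2) ^ (r - s) *
              (r.choose s : ℝ) := by
        intro g
        calc ∑ j ∈ Finset.range (2 ^ (t + 1)), (g j + k (t + 2)) ^ r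
            = ∑ j ∈ Finset.range (2 ^ (t + 1)), ∑ u ∈ Finset.range (r + 1),
                g j ^ u * k (t + 2) ^ (r - u) * (r.choose u : ℝ) := by
              simp_rw [add_pow]
          _ = ∑ u ∈ Finset.range (r + 1), ∑ j ∈ Finset.range (2 ^ (t + 1)),
                g j ^ u * k (t + 2) ^ (r - u) * (r.choose u : ℝ) := Finset.sum_comm
          _ = _ := by simp_rw [Finset.sum_mul]
      rw [hbin, hbin]
      rw [Finset.sum_range_succ, Finset.sum_range_succ]
      have hIH : ∀ s ∈ Finset.range r,
          (∑ j ∈ Finset.range (2 ^ (t + 1)), (seqXY a b c d k t j).2 ^ s) *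
              k (t + 2) ^ (r - s) * (r.choose s : ℝ) =
          (∑ j ∈ Finset.range (2 ^ (t + 1)), (seqXY a b c d k t j).1 ^ s) *
              k (t + 2) ^ (r - s) * (r.choose s : ℝ) := by
        intro s hs
        rw [IH s (by have := Finset.mem_range.mp hs; omega)]
      rw [Finset.sum_congr rfl hIH]
      simp [Nat.sub_self]
      ring

/-- Shifted version: adding a constant preserves the power-sum equality for exponents up
to the level. -/
lemma shifted_sum (a b c d : ℝ) (h : a + b = c + d) (k : ℕ → ℝ) (s : ℕ) (C : ℝ)
    (r : ℕ) (hr : r ≤ s + 1) :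
    ∑ j ∈ Finset.range (2 ^ (s + 1)), ((seqXY a b c d k s j).1 + C) ^ r =
    ∑ j ∈ Finset.range (2 ^ (s + 1)), ((seqXY a b c d k s j).2 + C) ^ r := by
  have hbin : ∀ g : ℕ → ℝ,
      ∑ j ∈ Finset.range (2 ^ (s + 1)), (g j + C) ^ r =
      ∑ u ∈ Finset.range (r + 1),
        (∑ j ∈ Finset.range (2 ^ (s + 1)), g j ^ u) * C ^ (r - u) *
          (r.choose u : ℝ) := by
    intro g
    calc ∑ j ∈ Finset.range (2 ^ (s + 1)), (g j + C) ^ r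
        = ∑ j ∈ Finset.range (2 ^ (s + 1)), ∑ u ∈ Finset.range (r + 1),
            g j ^ u * C ^ (r - u) * (r.choose u : ℝ) := by
          simp_rw [add_pow]
      _ = ∑ u ∈ Finset.range (r + 1), ∑ j ∈ Finset.range (2 ^ (s + 1)),
            g j ^ u * C ^ (r - u) * (r.choose u : ℝ) := Finset.sum_comm
      _ = _ := by simp_rw [Finset.sum_mul]
  rw [hbin, hbin]
  refine Finset.sum_congr rfl fun u hu => ?_
  rw [full_sums a b c d h k s u (by have := Finset.mem_range.mp hu; omega)]

/-- Each aligned block of length `2^(s+1)` in the level-`t` sequences is, up to a common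
additive constant, either a copy of the level-`s` pair or its swap. -/
lemma block_struct (a b c d : ℝ) (k : ℕ → ℝ) (s : ℕ) :
    ∀ t, s ≤ t → ∀ p, p < 2 ^ (t - s) → ∃ C : ℝ,
      (∀ j < 2 ^ (s + 1), seqXY a b c d k t (p * 2 ^ (s + 1) + j) =
        ((seqXY a b c d k s j).1 + C, (seqXY a b c d k s j).2 + C)) ∨
      (∀ j < 2 ^ (s + 1), seqXY a b c d k t (p * 2 ^ (s + 1) + j) =
        ((seqXY a b c d k s j).2 + C, (seqXY a b c d k s j).1 + C)) := by
  intro t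
  induction t with
  | zero =>
      intro hst p hp
      interval_cases s
      interval_cases p
      exact ⟨0, Or.inl fun j hj => by simp⟩
  | succ t IH =>
      intro hst p hp
      rcases Nat.lt_or_ge s (t + 1) with hlt | hge
      · -- s ≤ t
        have hst' : s ≤ t := by omega
        rcases Nat.lt_or_ge p (2 ^ (t - s)) with hp1 | hp2
        · -- first half
          obtain ⟨C, hC⟩ := IH hst' p hp1
          refine ⟨C, ?_⟩
          have hidx : ∀ j, j < 2 ^ (s + 1) → p * 2 ^ (s + 1) + j < 2 ^ (t + 1) := by
            intro j hj
            have h1 : (p + 1) * 2 ^ (s + 1) ≤ 2 ^ (t - s) * 2 ^ (s + 1) := by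
              exact Nat.mul_le_mul_right _ (by omega)
            have h2 : 2 ^ (t - s) * 2 ^ (s + 1) = 2 ^ (t + 1) := by
              rw [← pow_add]; congr 1; omega
            have : p * 2 ^ (s + 1) + j < (p + 1) * 2 ^ (s + 1) := by
              have : (p + 1) * 2 ^ (s + 1) = p * 2 ^ (s + 1) + 2 ^ (s + 1) := by ring
              omega
            omega
          rcases hC with hC | hC
          · exact Or.inl fun j hj => by
              rw [seqXY_first a b c d k t _ (hidx j hj)]; exact hC j hj
          · exact Or.inr fun j hj => by
              rw [seqXY_first a b c d k t _ (hidx j hj)]; exact hC j hj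
        · -- second half
          set q := p - 2 ^ (t - s) with hq
          have hq2 : q < 2 ^ (t - s) := by
            have h2 : 2 ^ (t + 1 - s) = 2 * 2 ^ (t - s) := by
              rw [← pow_succ']; congr 1; omega
            omega
          obtain ⟨C, hC⟩ := IH hst' q hq2
          refine ⟨C + k (t + 2), ?_⟩
          have hidx : ∀ j, p * 2 ^ (s + 1) + j = 2 ^ (t + 1) + (q * 2 ^ (s + 1) + j) := by
            intro j
            have h2 : 2 ^ (t - s) * 2 ^ (s + 1) = 2 ^ (t + 1) := by
              rw [← pow_add]; congr 1; omega
            have hpq : p = q + 2 ^ (t - s) := by omega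
            rw [hpq, Nat.add_mul, h2]; omega
          rcases hC with hC | hC
          · refine Or.inr fun j hj => ?_
            rw [hidx j, seqXY_second, hC j hj]
            simp; constructor <;> ring
          · refine Or.inl fun j hj => ?_
            rw [hidx j, seqXY_second, hC j hj]
            simp; constructor <;> ring
      · -- s = t + 1
        have hseq : s = t + 1 := by omega
        subst hseq
        have : p = 0 := by simpa using hp
        subst this
        exact ⟨0, Or.inl fun j hj => by simp⟩

theorem block_subsums_eq (a b c d : ℝ) (h : a + b = c + d)
    (n : ℕ) (hn : 1 ≤ n) (k : ℕ → ℝ)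
    (i : ℕ) (hi1 : 1 ≤ i) (hin : i ≤ n)
    (p : ℕ) (hp : p ≤ 2 ^ (n - i) - 1) :
    ∑ j ∈ Finset.Ico (p * 2 ^ i) ((p + 1) * 2 ^ i), X a b c d k n j ^ i =
      ∑ j ∈ Finset.Ico (p * 2 ^ i) ((p + 1) * 2 ^ i), Y a b c d k n j ^ i := by
  set s := i - 1 with hs
  set t := n - 1 with ht
  have hsi : s + 1 = i := by omega
  have hst : s ≤ t := by omega
  have hts : t - s = n - i := by omega
  have hp' : p < 2 ^ (t - s) := by
    rw [hts]
    have : 0 < 2 ^ (n - i) := Nat.pow_pos (by norm_num)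
    omega
  obtain ⟨C, hC⟩ := block_struct a b c d k s t hst p hp'
  have hlen : (p + 1) * 2 ^ i - p * 2 ^ i = 2 ^ i := by
    have h1 : (p + 1) * 2 ^ i = p * 2 ^ i + 2 ^ i := by ring
    rw [h1, Nat.add_sub_cancel_left]
  rw [Finset.sum_Ico_eq_sum_range, Finset.sum_Ico_eq_sum_range, hlen]
  unfold X Y
  rw [← ht, ← hsi]
  rcases hC with hC | hC
  · calc ∑ j ∈ Finset.range (2 ^ (s + 1)),
          (seqXY a b c d k t (p * 2 ^ (s + 1) + j)).1 ^ (s + 1)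
        = ∑ j ∈ Finset.range (2 ^ (s + 1)), ((seqXY a b c d k s j).1 + C) ^ (s + 1) := by
          refine Finset.sum_congr rfl fun j hj => ?_
          rw [hC j (Finset.mem_range.mp hj)]
      _ = ∑ j ∈ Finset.range (2 ^ (s + 1)), ((seqXY a b c d k s j).2 + C) ^ (s + 1) :=
          shifted_sum a b c d h k s C (s + 1) le_rfl
      _ = ∑ j ∈ Finset.range (2 ^ (s + 1)),
          (seqXY a b c d k t (p * 2 ^ (s + 1) + j)).2 ^ (s + 1) := by
          refine Finset.sum_congr rfl fun j hj => ?_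
          rw [hC j (Finset.mem_range.mp hj)]
  · calc ∑ j ∈ Finset.range (2 ^ (s + 1)),
          (seqXY a b c d k t (p * 2 ^ (s + 1) + j)).1 ^ (s + 1)
        = ∑ j ∈ Finset.range (2 ^ (s + 1)), ((seqXY a b c d k s j).2 + C) ^ (s + 1) := by
          refine Finset.sum_congr rfl fun j hj => ?_
          rw [hC j (Finset.mem_range.mp hj)]
      _ = ∑ j ∈ Finset.range (2 ^ (s + 1)), ((seqXY a b c d k s j).1 + C) ^ (s + 1) :=
          (shifted_sum a b c d h k s C (s + 1) le_rfl).symm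
      _ = ∑ j ∈ Finset.range (2 ^ (s + 1)),
          (seqXY a b c d k t (p * 2 ^ (s + 1) + j)).2 ^ (s + 1) := by
          refine Finset.sum_congr rfl fun j hj => ?_
          rw [hC j (Finset.mem_range.mp hj)]
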